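/- With f(l, i) as the asymmetric witness tree size (f(0,i)=1, f(l,i) = ∑_{j<i} f(l,j) + ∑_{j≥i} f(l−1,j)), there exist constants c_0, c_1 > 0 such that c_0 · φ_d^{(l−1)d + i} ≤ f(l, i) ≤ c_1 · φ_d^{(l−1)d + i} for all l ≥ 1 and 1 ≤ i ≤ d, where φ_d ∈ (1,2) is the unique root > 1 of x^d = 1 + x + ... + x^{d−1}. -/

import Mathlib

/-- The asymmetric witness tree sizes `f(l,i)` (`f(0,i) = 1`,
`f(l,i) = ∑_{j<i} f(l,j) + ∑_{j≥i} f(l−1,j)`) satisfy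
`c₀ · φ_d^{(l−1)d+i} ≤ f(l,i) ≤ c₁ · φ_d^{(l−1)d+i}`, where `φ_d ∈ (1,2)` is
the unique root `> 1` of `x^d = 1 + x + ⋯ + x^{d−1}`. -/
theorem stmt13 (d : ℕ) (hd : 2 ≤ d) (f : ℕ → ℕ → ℝ) (φ : ℝ)
    (hφ1 : 1 < φ) (hφ2 : φ < 2)
    (hφ : φ ^ d = ∑ i ∈ Finset.range d, φ ^ i)
    (hf0 : ∀ i ∈ Finset.Icc 1 d, f 0 i = 1)
    (hfrec : ∀ l, 1 ≤ l → ∀ i ∈ Finset.Icc 1 d,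
      f l i = ∑ j ∈ Finset.Icc 1 (i - 1), f l j + ∑ j ∈ Finset.Icc i d, f (l - 1) j) :
    ∃ c₀ c₁ : ℝ, 0 < c₀ ∧ 0 < c₁ ∧
      ∀ l, 1 ≤ l → ∀ i ∈ Finset.Icc 1 d,
        c₀ * φ ^ ((l - 1) * d + i) ≤ f l i ∧ f l i ≤ c₁ * φ ^ ((l - 1) * d + i) := by
  have hφ0 : (0:ℝ) < φ := lt_trans one_pos hφ1
  have hφne : φ ≠ 0 := ne_of_gt hφ0
  have hφne1 : φ ≠ 1 := ne_of_gt hφ1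
  have hsub : φ - 1 ≠ 0 := sub_ne_zero.mpr hφne1
  have hgeom : ∀ m : ℕ, ∑ k ∈ Finset.range m, φ ^ k = (φ ^ m - 1)/(φ - 1) :=
    fun m => geom_sum_eq hφne1 m
  have hphi' : φ * φ ^ d = 2 * φ ^ d - 1 := by
    rw [hgeom] at hφ
    field_simp at hφ
    linarith
  -- the central geometric-sum identity
  have hsum : ∀ l i : ℕ, 1 ≤ l → 1 ≤ i → i ≤ d →
      (∑ j ∈ Finset.Icc 1 (i-1), φ ^ (l*d + j - 1)) +
      (∑ j ∈ Finset.Icc i d, φ ^ ((l-1)*d + j - 1)) = φ ^ (l*d + i - 1) := by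
    intro l i hl hi1 hid
    obtain ⟨l', rfl⟩ : ∃ l', l = l' + 1 := ⟨l - 1, by omega⟩
    obtain ⟨m, rfl⟩ : ∃ m, i = m + 1 := ⟨i - 1, by omega⟩
    have hld : (l' + 1) * d = l' * d + d := by ring
    have h1 : (∑ j ∈ Finset.Icc 1 (m + 1 - 1), φ ^ ((l'+1)*d + j - 1)) =
        φ ^ (l'*d + d) * ((φ ^ m - 1)/(φ-1)) := by
      rw [← Finset.Ico_add_one_right_eq_Icc, Finset.sum_Ico_eq_sum_range]
      have : ∀ k ∈ Finset.range (m + 1 - 1 + 1 - 1), φ ^ ((l'+1)*d + (1+k) - 1)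
          = φ ^ (l'*d + d) * φ ^ k := by
        intro k _
        rw [← pow_add]
        congr 1
        rw [hld]; omega
      rw [Finset.sum_congr rfl this, ← Finset.mul_sum, hgeom]
      norm_num
    have h2 : (∑ j ∈ Finset.Icc (m+1) d, φ ^ ((l'+1-1)*d + j - 1)) =
        φ ^ (l'*d + m) * ((φ ^ (d - m) - 1)/(φ-1)) := by
      simp only [Nat.add_sub_cancel]
      rw [← Finset.Ico_add_one_right_eq_Icc, Finset.sum_Ico_eq_sum_range]
      have : ∀ k ∈ Finset.range (d + 1 - (m+1)), φ ^ (l'*d + (m+1+k) - 1)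
          = φ ^ (l'*d + m) * φ ^ k := by
        intro k _
        rw [← pow_add]
        congr 1
        omega
      rw [Finset.sum_congr rfl this, ← Finset.mul_sum, hgeom]
      have hcnt : d + 1 - (m + 1) = d - m := by omega
      rw [hcnt]
    rw [h1, h2]
    have e3 : φ ^ ((l'+1)*d + (m+1) - 1) = φ ^ (l'*d) * φ ^ d * φ ^ m := by
      rw [← pow_add, ← pow_add]; congr 1; rw [hld]; omega
    have e4 : φ ^ (d - m) * φ ^ m = φ ^ d := by rw [← pow_add]; congr 1; omega
    rw [e3, pow_add, pow_add]
    field_simp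
    linear_combination e4 - φ ^ m * hphi'
  have hPinv : φ ^ d * φ⁻¹ ^ d = 1 := by
    rw [← mul_pow, mul_inv_cancel₀ hφne, one_pow]
  -- key bound, by strong induction on n = l*d + i - 1
  have key : ∀ n : ℕ, ∀ l i : ℕ, 1 ≤ i → i ≤ d → l * d + i = n + 1 →
      φ ^ n * φ⁻¹ ^ d ≤ f l i ∧ f l i ≤ φ ^ n := by
    intro n
    induction n using Nat.strong_induction_on with
    | _ n IH =>
      intro l i hi1 hid hn
      rcases Nat.eq_zero_or_pos l with hl | hl
      · subst hl
        have hi : i = n + 1 := by simpa using hn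
        have hfv : f 0 i = 1 := hf0 i (Finset.mem_Icc.mpr ⟨hi1, hid⟩)
        have hnd : n ≤ d := by omega
        constructor
        · rw [hfv]
          calc φ ^ n * φ⁻¹ ^ d ≤ φ ^ d * φ⁻¹ ^ d := by
                have := pow_le_pow_right₀ hφ1.le hnd
                have hp : (0:ℝ) < φ⁻¹ ^ d := pow_pos (inv_pos.mpr hφ0) d
                nlinarith
            _ = 1 := hPinv
        · rw [hfv]
          exact one_le_pow₀ hφ1.le
      · obtain ⟨l', rfl⟩ : ∃ l', l = l' + 1 := ⟨l - 1, by omega⟩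
        have hld : (l' + 1) * d = l' * d + d := by ring
        have hmem : i ∈ Finset.Icc 1 d := Finset.mem_Icc.mpr ⟨hi1, hid⟩
        have hrec := hfrec (l' + 1) hl i hmem
        simp only [Nat.add_sub_cancel] at hrec
        -- termwise bounds from the induction hypothesis
        have hb1 : ∀ j ∈ Finset.Icc 1 (i - 1),
            φ ^ ((l'+1)*d + j - 1) * φ⁻¹ ^ d ≤ f (l'+1) j ∧
            f (l'+1) j ≤ φ ^ ((l'+1)*d + j - 1) := by
          intro j hj
          rw [Finset.mem_Icc] at hj
          exact IH ((l'+1)*d + j - 1) (by omega) (l'+1) j hj.1 (by omega) (by omega)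
        have hb2 : ∀ j ∈ Finset.Icc i d,
            φ ^ (l'*d + j - 1) * φ⁻¹ ^ d ≤ f l' j ∧
            f l' j ≤ φ ^ (l'*d + j - 1) := by
          intro j hj
          rw [Finset.mem_Icc] at hj
          exact IH (l'*d + j - 1) (by omega) l' j (by omega) hj.2 (by omega)
        have hS := hsum (l'+1) i hl hi1 hid
        simp only [Nat.add_sub_cancel] at hS
        have hneq : (l'+1) * d + i - 1 = n := by omega
        rw [hneq] at hS
        constructor
        · rw [hrec]
          have t1 : ∑ j ∈ Finset.Icc 1 (i-1), φ ^ ((l'+1)*d + j - 1) * φ⁻¹ ^ d ≤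
              ∑ j ∈ Finset.Icc 1 (i-1), f (l'+1) j :=
            Finset.sum_le_sum (fun j hj => (hb1 j hj).1)
          have t2 : ∑ j ∈ Finset.Icc i d, φ ^ (l'*d + j - 1) * φ⁻¹ ^ d ≤
              ∑ j ∈ Finset.Icc i d, f l' j :=
            Finset.sum_le_sum (fun j hj => (hb2 j hj).1)
          have := add_le_add t1 t2
          rw [← Finset.sum_mul, ← Finset.sum_mul, ← add_mul, hS] at this
          exact this
        · rw [hrec]
          have t1 : ∑ j ∈ Finset.Icc 1 (i-1), f (l'+1) j ≤
              ∑ j ∈ Finset.Icc 1 (i-1), φ ^ ((l'+1)*d + j - 1) :=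
            Finset.sum_le_sum (fun j hj => (hb1 j hj).2)
          have t2 : ∑ j ∈ Finset.Icc i d, f l' j ≤
              ∑ j ∈ Finset.Icc i d, φ ^ (l'*d + j - 1) :=
            Finset.sum_le_sum (fun j hj => (hb2 j hj).2)
          have := add_le_add t1 t2
          rw [hS] at this
          exact this
  -- assemble the constants
  refine ⟨φ ^ (d-1) * φ⁻¹ ^ d, φ ^ (d-1), by positivity, by positivity, ?_⟩
  intro l hl i hi
  rw [Finset.mem_Icc] at hi
  have hk := key (l * d + i - 1) l i hi.1 hi.2 (by omega)
  have hexp : φ ^ (l * d + i - 1) = φ ^ ((l-1)*d + i) * φ ^ (d - 1) := by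
    rw [← pow_add]
    congr 1
    obtain ⟨l', rfl⟩ : ∃ l', l = l' + 1 := ⟨l - 1, by omega⟩
    have hld : (l' + 1) * d = l' * d + d := by ring
    simp only [Nat.add_sub_cancel]
    omega
  rw [hexp] at hk
  constructor
  · calc φ ^ (d-1) * φ⁻¹ ^ d * φ ^ ((l-1)*d + i)
        = φ ^ ((l-1)*d + i) * φ ^ (d-1) * φ⁻¹ ^ d := by ring
      _ ≤ f l i := hk.1
  · calc f l i ≤ φ ^ ((l-1)*d + i) * φ ^ (d-1) := hk.2
      _ = φ ^ (d-1) * φ ^ ((l-1)*d + i) := by ring
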